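/- Explicit solution of the pathwise logistic equation (formula (3.1)): Let w : ℝ → ℝ be differentiable with w(0) = 0 and let x > 0. Define g(t) := x·exp(rt + σ·w(t)) / (1 + r·x·∫₀ᵗ exp(rs + σ·w(s)) ds). Then g(0) = x, g(t) > 0 for all t ≥ 0, and for all t ≥ 0, g is differentiable at t with g'(t) = g(t)·(r − r·g(t)) + σ·g(t)·w'(t). -/

import Mathlib

open Real Filter Topology intervalIntegral

/-- **Explicit solution of the pathwise logistic equation** (formula (3.1)).
For a differentiable noise path `w` with `w 0 = 0` and `x > 0`, the function
`g(t) = x e^{rt + σ w(t)} / (1 + r x ∫₀ᵗ e^{rs + σ w(s)} ds)` satisfies `g(0) = x`,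
is positive on `[0,∞)`, and solves `g' = g (r - r g) + σ g w'` there. -/
theorem logistic_explicit_solution_pathwise
    (r σ x : ℝ) (hr : 0 < r) (hx : 0 < x)
    (w : ℝ → ℝ) (hw : Differentiable ℝ w) (hw0 : w 0 = 0)
    (g : ℝ → ℝ)
    (hg : ∀ t : ℝ, g t =
      x * Real.exp (r * t + σ * w t) /
        (1 + r * x * ∫ s in (0:ℝ)..t, Real.exp (r * s + σ * w s))) :
    g 0 = x ∧ (∀ t : ℝ, 0 ≤ t → 0 < g t) ∧
    ∀ t : ℝ, 0 ≤ t →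
      HasDerivAt g (g t * (r - r * g t) + σ * g t * deriv w t) t := by
  set E : ℝ → ℝ := fun t => Real.exp (r * t + σ * w t) with hE_def
  have hEc : Continuous E := by
    exact Real.continuous_exp.comp ((continuous_const.mul continuous_id).add
      (continuous_const.mul hw.continuous))
  set F : ℝ → ℝ := fun t => ∫ s in (0:ℝ)..t, E s with hF_def
  set D : ℝ → ℝ := fun t => 1 + r * x * F t with hD_def
  have hgD : ∀ t, g t = x * E t / D t := hg
  have hDpos : ∀ t : ℝ, 0 ≤ t → 0 < D t := by
    intro t ht
    have hFnn : 0 ≤ F t := by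
      apply intervalIntegral.integral_nonneg ht
      intro s _
      exact (Real.exp_pos _).le
    have : 0 ≤ r * x * F t := by positivity
    simp only [hD_def]
    linarith
  have hF' : ∀ t : ℝ, HasDerivAt F (E t) t := by
    intro t
    exact intervalIntegral.integral_hasDerivAt_right
      (hEc.intervalIntegrable 0 t)
      (hEc.stronglyMeasurableAtFilter _ _)
      hEc.continuousAt
  have hE' : ∀ t : ℝ, HasDerivAt E (E t * (r + σ * deriv w t)) t := by
    intro t
    have hinner : HasDerivAt (fun u => r * u + σ * w u) (r + σ * deriv w t) t := by
      exact (((hasDerivAt_id t).const_mul r).add (((hw t).hasDerivAt).const_mul σ)).congr_deriv (by ring)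
    simpa [mul_comm, mul_one] using hinner.exp
  refine ⟨?_, ?_, ?_⟩
  · rw [hg 0]
    simp [hw0]
  · intro t ht
    rw [hgD t]
    have := hDpos t ht
    have := Real.exp_pos (r * t + σ * w t)
    positivity
  · intro t ht
    have hDne : D t ≠ 0 := (hDpos t ht).ne'
    have hD' : HasDerivAt D (r * x * E t) t := by
      simpa [hD_def] using ((hF' t).const_mul (r * x)).const_add 1
    have hnum : HasDerivAt (fun u => x * E u) (x * (E t * (r + σ * deriv w t))) t :=
      (hE' t).const_mul x
    have hq : HasDerivAt (fun u => x * E u / D u)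
        ((x * (E t * (r + σ * deriv w t)) * D t - x * E t * (r * x * E t)) / (D t)^2) t :=
      hnum.div hD' hDne
    have hgeq : g = fun u => x * E u / D u := funext hgD
    rw [hgeq]
    convert hq using 1
    simp only
    field_simp
    ring
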